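/- Under the same hypotheses (p ≥ 0, −(π/(b−a))⁴ − p(π/(b−a))² < c_m ≤ 0, u a classical solution of u⁗ − p u'' + c u = h with simply supported homogeneous boundary conditions), the sup-norm bound ‖u‖_{C(I)} ≤ (π/2) ‖h‖_{C(I)} / ((π/(b−a))⁴ + p(π/(b−a))² + c_m) holds. -/

import Mathlib

open Real MeasureTheory Set intervalIntegral Filter

lemma my_cs {a b : ℝ} (hab : a ≤ b) {f g : ℝ → ℝ}
    (hf : ContinuousOn f (Set.Icc a b)) (hg : ContinuousOn g (Set.Icc a b)) :
    (∫ t in a..b, f t * g t) ^ 2 ≤ (∫ t in a..b, f t ^ 2) * (∫ t in a..b, g t ^ 2) := by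
  have huIcc : Set.uIcc a b = Set.Icc a b := Set.uIcc_of_le hab
  have hif : IntervalIntegrable (fun t => f t ^ 2) volume a b :=
    (hf.pow 2).intervalIntegrable_of_Icc hab
  have hig : IntervalIntegrable (fun t => g t ^ 2) volume a b :=
    (hg.pow 2).intervalIntegrable_of_Icc hab
  have hifg : IntervalIntegrable (fun t => f t * g t) volume a b :=
    (hf.mul hg).intervalIntegrable_of_Icc hab
  set A := ∫ t in a..b, f t ^ 2 with hA
  set B := ∫ t in a..b, f t * g t with hB
  set C := ∫ t in a..b, g t ^ 2 with hC
  have key : ∀ x : ℝ, 0 ≤ C * (x * x) + (2 * B) * x + A := by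
    intro x
    have h0 : 0 ≤ ∫ t in a..b, (f t + x * g t) ^ 2 :=
      intervalIntegral.integral_nonneg hab (fun t _ => sq_nonneg _)
    have hexp : (∫ t in a..b, (f t + x * g t) ^ 2)
        = A + (2 * B) * x + C * (x * x) := by
      have : ∀ t, (f t + x * g t) ^ 2
          = f t ^ 2 + (2 * x) * (f t * g t) + (x * x) * g t ^ 2 := by intro t; ring
      rw [intervalIntegral.integral_congr (fun t _ => this t)]
      rw [intervalIntegral.integral_add (hif.add (hifg.const_mul _)) (hig.const_mul _),
        intervalIntegral.integral_add hif (hifg.const_mul _),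
        intervalIntegral.integral_const_mul, intervalIntegral.integral_const_mul]
      ring
    nlinarith [h0, hexp]
  have := discrim_le_zero key
  rw [discrim] at this
  nlinarith [this]

lemma my_wirtinger {a b : ℝ} (hab : a < b) {f f' : ℝ → ℝ}
    (hf : ∀ x, HasDerivAt f (f' x) x) (hf' : Continuous f')
    (ha : f a = 0) (hb : f b = 0) :
    (π / (b - a)) ^ 2 * ∫ t in a..b, f t ^ 2 ≤ ∫ t in a..b, f' t ^ 2 := by
  have hba : 0 < b - a := by linarith
  set ω : ℝ := π / (b - a) with hω
  have hω0 : 0 < ω := div_pos Real.pi_pos hba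
  have hωba : ω * (b - a) = π := by rw [hω]; exact div_mul_cancel₀ π hba.ne'
  have hfc : Continuous f := continuous_iff_continuousAt.2 fun x => (hf x).continuousAt
  obtain ⟨K, hK⟩ := (isCompact_Icc (a := a) (b := b)).exists_bound_of_continuousOn
    hf'.continuousOn
  have hK0 : 0 ≤ K := le_trans (norm_nonneg _) (hK a (by constructor <;> linarith))
  -- endpoint bounds on |f|
  have hfa : ∀ t ∈ Set.Icc a b, |f t| ≤ K * (t - a) := by
    intro t ht
    have h1 : ∫ s in a..t, f' s = f t - f a :=
      integral_eq_sub_of_hasDerivAt (fun x _ => hf x) (hf'.intervalIntegrable _ _)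
    have h2 : ‖∫ s in a..t, f' s‖ ≤ K * |t - a| := by
      apply intervalIntegral.norm_integral_le_of_norm_le_const
      intro x hx
      rw [Set.uIoc_of_le ht.1] at hx
      exact hK x ⟨le_of_lt hx.1, hx.2.trans ht.2⟩
    rw [h1, ha, sub_zero, Real.norm_eq_abs] at h2
    calc |f t| ≤ K * |t - a| := h2
      _ = K * (t - a) := by rw [abs_of_nonneg (by linarith [ht.1] : (0:ℝ) ≤ t - a)]
  have hfb : ∀ t ∈ Set.Icc a b, |f t| ≤ K * (b - t) := by
    intro t ht
    have h1 : ∫ s in t..b, f' s = f b - f t :=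
      integral_eq_sub_of_hasDerivAt (fun x _ => hf x) (hf'.intervalIntegrable _ _)
    have h2 : ‖∫ s in t..b, f' s‖ ≤ K * |b - t| := by
      apply intervalIntegral.norm_integral_le_of_norm_le_const
      intro x hx
      rw [Set.uIoc_of_le ht.2] at hx
      exact hK x ⟨ht.1.trans (le_of_lt hx.1), hx.2⟩
    rw [h1, hb, zero_sub, norm_neg, Real.norm_eq_abs] at h2
    calc |f t| ≤ K * |b - t| := h2
      _ = K * (b - t) := by rw [abs_of_nonneg (by linarith [ht.2] : (0:ℝ) ≤ b - t)]
  -- the integrand and primitive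
  set g : ℝ → ℝ := fun t => f' t ^ 2 - ω ^ 2 * f t ^ 2 with hg
  have hgc : Continuous g := by fun_prop
  set Φ : ℝ → ℝ := fun x => ∫ t in a..x, g t with hΦ
  have hΦc : Continuous Φ := continuous_iff_continuousAt.2 fun x =>
    (intervalIntegral.integral_hasDerivAt_right (hgc.intervalIntegrable _ _)
      (hgc.stronglyMeasurableAtFilter _ _) hgc.continuousAt).continuousAt
  -- multiplier
  set w : ℝ → ℝ := fun t => ω * (Real.cos (ω * (t - a)) / Real.sin (ω * (t - a))) with hw
  -- key inequality for small ε
  have key : ∀ ε ∈ Set.Ioo (0 : ℝ) ((b - a) / 2),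
      -(2 * K ^ 2 * ε) ≤ Φ (b - ε) - Φ (a + ε) := by
    intro ε hε
    obtain ⟨hε0, hε2⟩ := hε
    have hle : a + ε ≤ b - ε := by linarith
    have huIcc : Set.uIcc (a + ε) (b - ε) = Set.Icc (a + ε) (b - ε) := Set.uIcc_of_le hle
    -- sin positive on the subinterval
    have hsin : ∀ t ∈ Set.Icc (a + ε) (b - ε), 0 < Real.sin (ω * (t - a)) := by
      intro t ht
      apply Real.sin_pos_of_pos_of_lt_pi
      · exact mul_pos hω0 (by linarith [ht.1])
      · calc ω * (t - a) ≤ ω * (b - ε - a) := by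
              apply mul_le_mul_of_nonneg_left (by linarith [ht.2]) hω0.le
          _ < ω * (b - a) := by apply mul_lt_mul_of_pos_left (by linarith) hω0
          _ = π := hωba
    -- derivative of W = w * f^2 on the subinterval
    have hW : ∀ t ∈ Set.Icc (a + ε) (b - ε),
        HasDerivAt (fun t => w t * f t ^ 2)
          (g t - (f' t - w t * f t) ^ 2) t := by
      intro t ht
      have hs := hsin t ht
      have hlin : HasDerivAt (fun t : ℝ => ω * (t - a)) ω t := by
        simpa using ((hasDerivAt_id t).sub_const a).const_mul ω
      have hcos : HasDerivAt (fun t : ℝ => Real.cos (ω * (t - a)))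
          (-Real.sin (ω * (t - a)) * ω) t := (Real.hasDerivAt_cos _).comp t hlin
      have hsin' : HasDerivAt (fun t : ℝ => Real.sin (ω * (t - a)))
          (Real.cos (ω * (t - a)) * ω) t := (Real.hasDerivAt_sin _).comp t hlin
      have hdiv := (hcos.div hsin' hs.ne')
      have hwd : HasDerivAt w (ω * ((-Real.sin (ω * (t - a)) * ω * Real.sin (ω * (t - a)) -
          Real.cos (ω * (t - a)) * (Real.cos (ω * (t - a)) * ω)) /
          Real.sin (ω * (t - a)) ^ 2)) t := hdiv.const_mul ω
      have hfd : HasDerivAt (fun t => f t ^ 2) (2 * f t * f' t) t := by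
        simpa [mul_comm] using ((hf t).fun_pow 2)
      have := hwd.fun_mul hfd
      refine this.congr_deriv ?_
      symm
      have hpy : Real.sin (ω * (t - a)) ^ 2 + Real.cos (ω * (t - a)) ^ 2 = 1 :=
        Real.sin_sq_add_cos_sq _
      simp only [hw, hg]
      field_simp [hw, hg]
      nlinarith [hpy, sq_nonneg (Real.sin (ω * (t - a)))]
    -- continuity of w on the subinterval
    have hwc : ContinuousOn w (Set.Icc (a + ε) (b - ε)) := by
      apply ContinuousOn.mul continuousOn_const
      exact ContinuousOn.div
        (Real.continuous_cos.comp (by fun_prop)).continuousOn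
        (Real.continuous_sin.comp (by fun_prop)).continuousOn
        (fun t ht => (hsin t ht).ne')
    have hsqc : ContinuousOn (fun t => (f' t - w t * f t) ^ 2)
        (Set.Icc (a + ε) (b - ε)) := by
      apply ContinuousOn.pow
      exact hf'.continuousOn.sub (hwc.mul hfc.continuousOn)
    have hint1 : IntervalIntegrable (fun t => g t - (f' t - w t * f t) ^ 2)
        volume (a + ε) (b - ε) :=
      (hgc.continuousOn.sub hsqc).intervalIntegrable_of_Icc hle
    have hint2 : IntervalIntegrable (fun t => (f' t - w t * f t) ^ 2)
        volume (a + ε) (b - ε) := hsqc.intervalIntegrable_of_Icc hle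
    -- FTC
    have hftc : ∫ t in (a+ε)..(b-ε), (g t - (f' t - w t * f t) ^ 2)
        = w (b - ε) * f (b - ε) ^ 2 - w (a + ε) * f (a + ε) ^ 2 := by
      exact integral_eq_sub_of_hasDerivAt (f := fun t => w t * f t ^ 2)
        (fun t ht => hW t (huIcc ▸ ht)) hint1
    have hsplit : ∫ t in (a+ε)..(b-ε), g t
        = (∫ t in (a+ε)..(b-ε), (g t - (f' t - w t * f t) ^ 2))
          + ∫ t in (a+ε)..(b-ε), (f' t - w t * f t) ^ 2 := by
      rw [← intervalIntegral.integral_add hint1 hint2]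
      apply intervalIntegral.integral_congr
      intro t _; ring
    have hsq0 : 0 ≤ ∫ t in (a+ε)..(b-ε), (f' t - w t * f t) ^ 2 :=
      intervalIntegral.integral_nonneg hle (fun t _ => sq_nonneg _)
    -- boundary estimates
    have hωε1 : 0 < ω * ε := mul_pos hω0 hε0
    have hωε2 : ω * ε < π / 2 := by
      have : ω * ε < ω * ((b - a) / 2) := mul_lt_mul_of_pos_left hε2 hω0
      calc ω * ε < ω * ((b - a) / 2) := this
        _ = π / 2 := by rw [← hωba]; ring
    have hcosε : 0 < Real.cos (ω * ε) := Real.cos_pos_of_mem_Ioo ⟨by linarith, hωε2⟩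
    have hsinε : 0 < Real.sin (ω * ε) := Real.sin_pos_of_pos_of_lt_pi hωε1
      (by linarith [Real.pi_gt_three])
    have htan : ω * ε < Real.tan (ω * ε) := Real.lt_tan hωε1 hωε2
    have htan' : ω * ε * Real.cos (ω * ε) < Real.sin (ω * ε) := by
      rw [Real.tan_eq_sin_div_cos, lt_div_iff₀ hcosε] at htan
      linarith [htan]
    set C : ℝ := ω * (Real.cos (ω * ε) / Real.sin (ω * ε)) with hCdef
    have hC0 : 0 ≤ C := by positivity
    have hCε : ε * C ≤ 1 := by
      have heq : ε * C = (ω * ε * Real.cos (ω * ε)) / Real.sin (ω * ε) := by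
        rw [hCdef]; field_simp
      rw [heq, div_le_one hsinε]
      exact htan'.le
    -- endpoint values of w
    have hwa : w (a + ε) = C := by
      simp only [hw, hCdef, add_sub_cancel_left]
    have hwb : w (b - ε) = -C := by
      have h1 : ω * (b - ε - a) = π - ω * ε := by rw [← hωba]; ring
      simp only [hw, hCdef, h1, Real.sin_pi_sub, Real.cos_pi_sub]
      ring
    have hwa0 : 0 ≤ w (a + ε) := by rw [hwa]; exact hC0
    have hwb0 : w (b - ε) ≤ 0 := by rw [hwb]; exact neg_nonpos.mpr hC0
    have hfae : |f (a + ε)| ≤ K * ε := by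
      have h := hfa (a + ε) ⟨by linarith, by linarith⟩
      simpa using h
    have hfbe : |f (b - ε)| ≤ K * ε := by
      have h := hfb (b - ε) ⟨by linarith, by linarith⟩
      calc |f (b - ε)| ≤ K * (b - (b - ε)) := h
        _ = K * ε := by ring
    have hfae2 : f (a + ε) ^ 2 ≤ (K * ε) ^ 2 := by
      rw [← sq_abs]; exact pow_le_pow_left₀ (abs_nonneg _) hfae 2
    have hfbe2 : f (b - ε) ^ 2 ≤ (K * ε) ^ 2 := by
      rw [← sq_abs]; exact pow_le_pow_left₀ (abs_nonneg _) hfbe 2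
    have hWa : w (a + ε) * f (a + ε) ^ 2 ≤ K ^ 2 * ε := by
      have h3 : w (a + ε) * f (a + ε) ^ 2 ≤ w (a + ε) * (K * ε) ^ 2 :=
        mul_le_mul_of_nonneg_left hfae2 hwa0
      have h4 : ε * (w (a + ε) * f (a + ε) ^ 2) ≤ ε * (w (a + ε) * (K * ε) ^ 2) :=
        mul_le_mul_of_nonneg_left h3 hε0.le
      have h5 : ε * w (a + ε) ≤ 1 := by rw [hwa]; exact hCε
      have h6 : ε * (w (a + ε) * (K * ε) ^ 2) = (ε * w (a + ε)) * (K * ε) ^ 2 := by ring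
      have h7 : (ε * w (a + ε)) * (K * ε) ^ 2 ≤ 1 * (K * ε) ^ 2 :=
        mul_le_mul_of_nonneg_right h5 (sq_nonneg _)
      have h8 : ε * (w (a + ε) * f (a + ε) ^ 2) ≤ ε * (K ^ 2 * ε) := by
        have h9 : (1 : ℝ) * (K * ε) ^ 2 = ε * (K ^ 2 * ε) := by ring
        linarith [h4, h6 ▸ h4, h7]
      exact le_of_mul_le_mul_left h8 hε0
    have hWb : -(K ^ 2 * ε) ≤ w (b - ε) * f (b - ε) ^ 2 := by
      have h3 : w (b - ε) * (K * ε) ^ 2 ≤ w (b - ε) * f (b - ε) ^ 2 :=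
        mul_le_mul_of_nonpos_left hfbe2 hwb0
      have h4 : ε * (w (b - ε) * (K * ε) ^ 2) ≤ ε * (w (b - ε) * f (b - ε) ^ 2) :=
        mul_le_mul_of_nonneg_left h3 hε0.le
      have h5 : -1 ≤ ε * w (b - ε) := by
        rw [hwb]
        have h5a : ε * -C = -(ε * C) := by ring
        rw [h5a]
        linarith [hCε]
      have h7 : (-1 : ℝ) * (K * ε) ^ 2 ≤ (ε * w (b - ε)) * (K * ε) ^ 2 :=
        mul_le_mul_of_nonneg_right h5 (sq_nonneg _)
      have h8 : ε * -(K ^ 2 * ε) ≤ ε * (w (b - ε) * f (b - ε) ^ 2) := by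
        have h6 : (ε * w (b - ε)) * (K * ε) ^ 2 = ε * (w (b - ε) * (K * ε) ^ 2) := by ring
        have h9 : ε * -(K ^ 2 * ε) = (-1 : ℝ) * (K * ε) ^ 2 := by ring
        linarith [h4, h7]
      exact le_of_mul_le_mul_left h8 hε0
    have hΦeq : Φ (b - ε) - Φ (a + ε) = ∫ t in (a+ε)..(b-ε), g t :=
      intervalIntegral.integral_interval_sub_left (hgc.intervalIntegrable _ _)
        (hgc.intervalIntegrable _ _)
    rw [hΦeq, hsplit, hftc]
    linarith [hsq0, hWa, hWb]
  -- pass to the limit ε → 0+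
  have hlim1 : Tendsto (fun ε : ℝ => Φ (b - ε) - Φ (a + ε)) (nhdsWithin 0 (Set.Ioi 0))
      (nhds (Φ b - Φ a)) := by
    have h1 : Tendsto (fun ε : ℝ => b - ε) (nhds 0) (nhds b) := by
      simpa using (tendsto_const_nhds (x := b) (f := (nhds (0:ℝ)))).sub tendsto_id
    have h2 : Tendsto (fun ε : ℝ => a + ε) (nhds 0) (nhds a) := by
      simpa using (tendsto_const_nhds (x := a) (f := (nhds (0:ℝ)))).add tendsto_id
    exact (((hΦc.tendsto b).comp h1).sub ((hΦc.tendsto a).comp h2)).mono_left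
      nhdsWithin_le_nhds
  have hlim2 : Tendsto (fun ε : ℝ => -(2 * K ^ 2 * ε)) (nhdsWithin 0 (Set.Ioi 0))
      (nhds 0) := by
    have h1 : Tendsto (fun ε : ℝ => -(2 * K ^ 2 * ε)) (nhds 0)
        (nhds (-(2 * K ^ 2 * 0))) := ((tendsto_id (x := nhds (0:ℝ))).const_mul _).neg
    simpa using h1.mono_left nhdsWithin_le_nhds
  have hev : ∀ᶠ ε in nhdsWithin 0 (Set.Ioi 0),
      -(2 * K ^ 2 * ε) ≤ Φ (b - ε) - Φ (a + ε) := by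
    have hmem : Set.Ioo (0:ℝ) ((b - a) / 2) ∈ nhdsWithin (0:ℝ) (Set.Ioi 0) :=
      Ioo_mem_nhdsGT_of_mem ⟨le_refl 0, half_pos hba⟩
    filter_upwards [hmem] with ε hε using key ε hε
  have h0le : (0:ℝ) ≤ Φ b - Φ a := le_of_tendsto_of_tendsto hlim2 hlim1 hev
  have hΦa : Φ a = 0 := intervalIntegral.integral_same
  have hΦb : Φ b = (∫ t in a..b, f' t ^ 2) - ω ^ 2 * ∫ t in a..b, f t ^ 2 := by
    simp only [hΦ, hg]
    rw [intervalIntegral.integral_sub ((hf'.fun_pow 2).intervalIntegrable _ _)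
      ((continuous_const.fun_mul (hfc.fun_pow 2)).intervalIntegrable _ _),
      intervalIntegral.integral_const_mul]
  linarith [h0le, hΦa, hΦb]

set_option maxHeartbeats 2000000 in
/-- Sup-norm a priori bound for solutions of
`u⁗ - p u'' + c u = h`, `u(a)=u(b)=u''(a)=u''(b)=0`, when
`-(π/(b-a))⁴ - p(π/(b-a))² < c_m := min_I c ≤ 0`:
`‖u‖_{C(I)} ≤ (π/2) ‖h‖_{C(I)} / ((π/(b-a))⁴ + p(π/(b-a))² + c_m)`. -/
theorem stmt_10 (a b p : ℝ) (hab : a < b) (hp : 0 ≤ p) (c h : ℝ → ℝ)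
    (hc : ContinuousOn c (Set.Icc a b)) (hh : ContinuousOn h (Set.Icc a b))
    (cm : ℝ) (hcm : IsLeast (c '' Set.Icc a b) cm)
    (hcm1 : -(π / (b - a)) ^ 4 - p * (π / (b - a)) ^ 2 < cm) (hcm2 : cm ≤ 0)
    (u : ℝ → ℝ) (hu : ContDiff ℝ 4 u)
    (heq : ∀ t ∈ Set.Icc a b,
      iteratedDeriv 4 u t - p * iteratedDeriv 2 u t + c t * u t = h t)
    (hua : u a = 0) (hub : u b = 0)
    (hua'' : iteratedDeriv 2 u a = 0) (hub'' : iteratedDeriv 2 u b = 0) :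
    ∀ t ∈ Set.Icc a b,
      |u t| ≤ (π / 2) * sSup ((fun t => |h t|) '' Set.Icc a b) /
        ((π / (b - a)) ^ 4 + p * (π / (b - a)) ^ 2 + cm) := by
  have hab' : a ≤ b := hab.le
  have hba : 0 < b - a := by linarith
  set ω : ℝ := π / (b - a) with hω
  have hω0 : 0 < ω := div_pos Real.pi_pos hba
  have hωba : ω * (b - a) = π := by rw [hω]; exact div_mul_cancel₀ π hba.ne'
  set D : ℝ := ω ^ 4 + p * ω ^ 2 + cm with hD
  have hD0 : 0 < D := by rw [hD]; nlinarith [hcm1]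
  set M : ℝ := sSup ((fun t => |h t|) '' Set.Icc a b) with hM
  -- continuity of iterated derivatives
  have hcont : ∀ k : ℕ, k ≤ 4 → Continuous (iteratedDeriv k u) := by
    intro k hk
    exact hu.continuous_iteratedDeriv k (by exact_mod_cast Nat.cast_le.mpr hk)
  have hder : ∀ k : ℕ, k < 4 → ∀ t, HasDerivAt (iteratedDeriv k u)
      (iteratedDeriv (k + 1) u t) t := by
    intro k hk t
    have hd := hu.differentiable_iteratedDeriv k (by exact_mod_cast Nat.cast_lt.mpr hk)
    simpa [iteratedDeriv_succ] using (hd t).hasDerivAt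
  have hu0 : iteratedDeriv 0 u = u := iteratedDeriv_zero
  have hc0 : Continuous u := by simpa [hu0] using hcont 0 (by norm_num)
  have hc1 : Continuous (iteratedDeriv 1 u) := hcont 1 (by norm_num)
  have hc2 : Continuous (iteratedDeriv 2 u) := hcont 2 (by norm_num)
  have hc3 : Continuous (iteratedDeriv 3 u) := hcont 3 (by norm_num)
  have hc4 : Continuous (iteratedDeriv 4 u) := hcont 4 (by norm_num)
  have hd0 : ∀ t, HasDerivAt u (iteratedDeriv 1 u t) t := by
    intro t; have := hder 0 (by norm_num) t; rwa [hu0] at this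
  have hd1 : ∀ t, HasDerivAt (iteratedDeriv 1 u) (iteratedDeriv 2 u t) t :=
    hder 1 (by norm_num)
  have hd2 : ∀ t, HasDerivAt (iteratedDeriv 2 u) (iteratedDeriv 3 u t) t :=
    hder 2 (by norm_num)
  have hd3 : ∀ t, HasDerivAt (iteratedDeriv 3 u) (iteratedDeriv 4 u t) t :=
    hder 3 (by norm_num)
  -- integration by parts helper
  have ibp : ∀ (v z v' z' : ℝ → ℝ), (∀ x, HasDerivAt v (v' x) x) →
      (∀ x, HasDerivAt z (z' x) x) → Continuous v' → Continuous z' →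
      ∫ x in a..b, v x * z' x
        = v b * z b - v a * z a - ∫ x in a..b, v' x * z x := by
    intro v z v' z' hv hz hv' hz'
    exact intervalIntegral.integral_mul_deriv_eq_deriv_mul
      (fun x _ => hv x) (fun x _ => hz x)
      (hv'.intervalIntegrable _ _) (hz'.intervalIntegrable _ _)
  set A : ℝ := ∫ t in a..b, u t ^ 2 with hA
  set B : ℝ := ∫ t in a..b, iteratedDeriv 1 u t ^ 2 with hB
  set C2 : ℝ := ∫ t in a..b, iteratedDeriv 2 u t ^ 2 with hC2
  have hA0 : 0 ≤ A := intervalIntegral.integral_nonneg hab' fun t _ => sq_nonneg _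
  have hB0 : 0 ≤ B := intervalIntegral.integral_nonneg hab' fun t _ => sq_nonneg _
  -- ∫ u'' u = -B
  have i21 : ∫ x in a..b, iteratedDeriv 1 u x * iteratedDeriv 1 u x
      = iteratedDeriv 1 u b * u b - iteratedDeriv 1 u a * u a
        - ∫ x in a..b, iteratedDeriv 2 u x * u x := ibp _ _ _ _ hd1 hd0 hc2 hc1
  have hi2u : ∫ x in a..b, iteratedDeriv 2 u x * u x = -B := by
    have hBalt : ∫ x in a..b, iteratedDeriv 1 u x * iteratedDeriv 1 u x = B := by
      rw [hB]; apply intervalIntegral.integral_congr; intro t _; ring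
    rw [hBalt, hua, hub] at i21; linarith only [i21]
  -- ∫ u''' u' = -C2
  have i32 : ∫ x in a..b, iteratedDeriv 2 u x * iteratedDeriv 2 u x
      = iteratedDeriv 2 u b * iteratedDeriv 1 u b
        - iteratedDeriv 2 u a * iteratedDeriv 1 u a
        - ∫ x in a..b, iteratedDeriv 3 u x * iteratedDeriv 1 u x :=
    ibp _ _ _ _ hd2 hd1 hc3 hc2
  have hi31 : ∫ x in a..b, iteratedDeriv 3 u x * iteratedDeriv 1 u x = -C2 := by
    have hCalt : ∫ x in a..b, iteratedDeriv 2 u x * iteratedDeriv 2 u x = C2 := by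
      rw [hC2]; apply intervalIntegral.integral_congr; intro t _; ring
    rw [hCalt, hua'', hub''] at i32; linarith only [i32]
  -- ∫ u'''' u = C2
  have i41 : ∫ x in a..b, iteratedDeriv 3 u x * iteratedDeriv 1 u x
      = iteratedDeriv 3 u b * u b - iteratedDeriv 3 u a * u a
        - ∫ x in a..b, iteratedDeriv 4 u x * u x := ibp _ _ _ _ hd3 hd0 hc4 hc1
  have hi4u : ∫ x in a..b, iteratedDeriv 4 u x * u x = C2 := by
    rw [hi31, hua, hub] at i41; linarith only [i41]
  -- energy identity
  have henergy : C2 + p * B + (∫ t in a..b, c t * u t ^ 2)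
      = ∫ t in a..b, h t * u t := by
    have hlhs : ∫ t in a..b,
        (iteratedDeriv 4 u t - p * iteratedDeriv 2 u t + c t * u t) * u t
        = ∫ t in a..b, h t * u t := by
      apply intervalIntegral.integral_congr
      intro t ht
      rw [Set.uIcc_of_le hab'] at ht
      exact congrArg (fun y => y * u t) (heq t ht)
    have hint1 : IntervalIntegrable (fun t => iteratedDeriv 4 u t * u t) volume a b :=
      (hc4.mul hc0).intervalIntegrable _ _
    have hint2 : IntervalIntegrable (fun t => p * (iteratedDeriv 2 u t * u t)) volume a b :=
      (continuous_const.mul (hc2.mul hc0)).intervalIntegrable _ _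
    have hint3 : IntervalIntegrable (fun t => c t * u t ^ 2) volume a b :=
      (hc.mul (hc0.pow 2).continuousOn).intervalIntegrable_of_Icc hab'
    have hsplit : ∫ t in a..b,
        (iteratedDeriv 4 u t - p * iteratedDeriv 2 u t + c t * u t) * u t
        = (∫ t in a..b, iteratedDeriv 4 u t * u t)
          - (∫ t in a..b, p * (iteratedDeriv 2 u t * u t))
          + ∫ t in a..b, c t * u t ^ 2 := by
      rw [← intervalIntegral.integral_sub hint1 hint2,
        ← intervalIntegral.integral_add (hint1.sub hint2) hint3]
      apply intervalIntegral.integral_congr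
      intro t _; ring
    rw [hsplit, hi4u, intervalIntegral.integral_const_mul, hi2u] at hlhs
    linarith only [hlhs]
  -- sup norm of h
  have hMub : ∀ t ∈ Set.Icc a b, |h t| ≤ M := by
    intro t ht
    apply le_csSup (isCompact_Icc.image_of_continuousOn hh.abs).bddAbove
    exact ⟨t, ht, rfl⟩
  have hM0 : 0 ≤ M := le_trans (abs_nonneg (h a)) (hMub a ⟨le_refl a, hab'⟩)
  set I : ℝ := ∫ t in a..b, |u t| with hI
  set J : ℝ := ∫ t in a..b, |iteratedDeriv 1 u t| with hJ
  have hI0 : 0 ≤ I := intervalIntegral.integral_nonneg hab' fun t _ => abs_nonneg _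
  have hJ0 : 0 ≤ J := intervalIntegral.integral_nonneg hab' fun t _ => abs_nonneg _
  have hhu : (∫ t in a..b, h t * u t) ≤ M * I := by
    have h1 : (∫ t in a..b, h t * u t) ≤ ∫ t in a..b, M * |u t| := by
      apply intervalIntegral.integral_mono_on hab'
      · exact (hh.mul hc0.continuousOn).intervalIntegrable_of_Icc hab'
      · exact (continuous_const.mul hc0.abs).intervalIntegrable _ _
      · intro t ht
        calc h t * u t ≤ |h t * u t| := le_abs_self _
          _ = |h t| * |u t| := abs_mul _ _
          _ ≤ M * |u t| := mul_le_mul_of_nonneg_right (hMub t ht) (abs_nonneg _)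
    rwa [intervalIntegral.integral_const_mul] at h1
  have hcmA : cm * A ≤ ∫ t in a..b, c t * u t ^ 2 := by
    have h1 : (∫ t in a..b, cm * u t ^ 2) ≤ ∫ t in a..b, c t * u t ^ 2 := by
      apply intervalIntegral.integral_mono_on hab'
      · exact (continuous_const.mul (hc0.pow 2)).intervalIntegrable _ _
      · exact (hc.mul (hc0.pow 2).continuousOn).intervalIntegrable_of_Icc hab'
      · intro t ht
        exact mul_le_mul_of_nonneg_right (hcm.2 ⟨t, ht, rfl⟩) (sq_nonneg _)
    rwa [intervalIntegral.integral_const_mul] at h1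
  have hE : C2 + p * B + cm * A ≤ M * I := by linarith only [henergy, hhu, hcmA]
  have hW1 : ω ^ 2 * A ≤ B := my_wirtinger hab hd0 hc1 hua hub
  have hCS1 : B ^ 2 ≤ C2 * A := by
    have h1 := my_cs hab' hc2.continuousOn hc0.continuousOn
    rw [hi2u] at h1
    calc B ^ 2 = (-B) ^ 2 := by ring
      _ ≤ C2 * A := h1
  have hCSI : I ^ 2 ≤ (b - a) * A := by
    have h1 := my_cs hab' (f := fun t => |u t|) (g := fun _ => (1:ℝ))
      hc0.abs.continuousOn continuousOn_const
    have e1 : (∫ t in a..b, |u t| * 1) = I := by simp [hI]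
    have e2 : (∫ t in a..b, |u t| ^ 2) = A := by
      rw [hA]; apply intervalIntegral.integral_congr; intro t _; exact sq_abs _
    have e3 : (∫ t in a..b, (1:ℝ) ^ 2) = b - a := by simp
    rw [e1, e2, e3] at h1
    linarith only [h1]
  have hCSJ : J ^ 2 ≤ (b - a) * B := by
    have h1 := my_cs hab' (f := fun t => |iteratedDeriv 1 u t|) (g := fun _ => (1:ℝ))
      hc1.abs.continuousOn continuousOn_const
    have e1 : (∫ t in a..b, |iteratedDeriv 1 u t| * 1) = J := by simp [hJ]
    have e2 : (∫ t in a..b, |iteratedDeriv 1 u t| ^ 2) = B := by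
      rw [hB]; apply intervalIntegral.integral_congr; intro t _; exact sq_abs _
    have e3 : (∫ t in a..b, (1:ℝ) ^ 2) = b - a := by simp
    rw [e1, e2, e3] at h1
    linarith only [h1]
  -- I bound
  have hDI : D * I ≤ (b - a) * M := by
    rcases eq_or_lt_of_le hI0 with hI0' | hIpos
    · rw [← hI0', mul_zero]
      exact mul_nonneg hba.le hM0
    · have hApos : 0 < A := by nlinarith only [hCSI, hIpos, hA0, hba]
      have hstep1 : ω ^ 2 * B ≤ C2 := by
        nlinarith only [hCS1, mul_le_mul_of_nonneg_right hW1 hB0, hApos]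
      have hDA : D * A ≤ M * I := by
        have h1 : p * (ω ^ 2 * A) ≤ p * B := mul_le_mul_of_nonneg_left hW1 hp
        have h2 : ω ^ 2 * (ω ^ 2 * A) ≤ ω ^ 2 * B :=
          mul_le_mul_of_nonneg_left hW1 (by positivity)
        rw [hD]; nlinarith only [hE, hstep1, h1, h2]
      have h3 : D * I * I ≤ (b - a) * M * I := by
        have h4 : D * I ^ 2 ≤ D * ((b - a) * A) := mul_le_mul_of_nonneg_left hCSI hD0.le
        nlinarith only [h4, mul_le_mul_of_nonneg_left hDA hba.le]
      exact le_of_mul_le_mul_right h3 hIpos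
  -- B bound
  have hDB : D * B ≤ ω ^ 2 * (M * I) := by
    rcases eq_or_lt_of_le hA0 with hA0' | hApos
    · have hBz : B = 0 := by
        have h9 : B ^ 2 ≤ 0 := by
          have := hCS1
          rw [← hA0', mul_zero] at this
          exact this
        have hBle : B ≤ 0 := by nlinarith only [h9, hB0]
        exact le_antisymm hBle hB0
      rw [hBz, mul_zero]
      exact mul_nonneg (by positivity) (mul_nonneg hM0 hI0)
    · have hstep1 : ω ^ 2 * B ≤ C2 := by
        nlinarith only [hCS1, mul_le_mul_of_nonneg_right hW1 hB0, hApos]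
      have hcmB : cm * B ≤ cm * (ω ^ 2 * A) := mul_le_mul_of_nonpos_left hW1 hcm2
      have hsC : ω ^ 2 * (ω ^ 2 * B) ≤ ω ^ 2 * C2 :=
        mul_le_mul_of_nonneg_left hstep1 (by positivity)
      have hE2 : ω ^ 2 * (C2 + p * B + cm * A) ≤ ω ^ 2 * (M * I) :=
        mul_le_mul_of_nonneg_left hE (by positivity)
      rw [hD]; nlinarith only [hcmB, hsC, hE2]
  -- J bound
  have hDJ : D * J ≤ π * M := by
    have h2 : D * (D * B) ≤ D * (ω ^ 2 * (M * I)) := mul_le_mul_of_nonneg_left hDB hD0.le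
    have h3 : ω ^ 2 * M * (D * I) ≤ ω ^ 2 * M * ((b - a) * M) :=
      mul_le_mul_of_nonneg_left hDI (mul_nonneg (by positivity) hM0)
    have h4 : D ^ 2 * B ≤ ω ^ 2 * (b - a) * M ^ 2 := by nlinarith only [h2, h3]
    have h5 : D ^ 2 * J ^ 2 ≤ D ^ 2 * ((b - a) * B) :=
      mul_le_mul_of_nonneg_left hCSJ (by positivity)
    have h6 : D ^ 2 * J ^ 2 ≤ π ^ 2 * M ^ 2 := by
      have h7 : (b - a) * (D ^ 2 * B) ≤ (b - a) * (ω ^ 2 * (b - a) * M ^ 2) :=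
        mul_le_mul_of_nonneg_left h4 hba.le
      have h8 : (b - a) * (ω ^ 2 * (b - a) * M ^ 2) = π ^ 2 * M ^ 2 := by
        rw [← hωba]; ring
      nlinarith only [h5, h7, h8]
    have h9 : (D * J) ^ 2 ≤ (π * M) ^ 2 := by nlinarith only [h6]
    exact le_of_pow_le_pow_left₀ (by norm_num) (mul_nonneg Real.pi_pos.le hM0) h9
  -- pointwise conclusion
  intro t ht
  have hut1 : u t = ∫ s in a..t, iteratedDeriv 1 u s := by
    have h1 := integral_eq_sub_of_hasDerivAt (f := u) (f' := iteratedDeriv 1 u)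
      (a := a) (b := t) (fun x _ => hd0 x) (hc1.intervalIntegrable a t)
    rw [hua, sub_zero] at h1; exact h1.symm
  have hut2 : -u t = ∫ s in t..b, iteratedDeriv 1 u s := by
    have h1 := integral_eq_sub_of_hasDerivAt (f := u) (f' := iteratedDeriv 1 u)
      (a := t) (b := b) (fun x _ => hd0 x) (hc1.intervalIntegrable t b)
    rw [hub, zero_sub] at h1; exact h1.symm
  have habs1 : |u t| ≤ ∫ s in a..t, |iteratedDeriv 1 u s| := by
    rw [hut1]; exact intervalIntegral.abs_integral_le_integral_abs ht.1
  have habs2 : |u t| ≤ ∫ s in t..b, |iteratedDeriv 1 u s| := by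
    rw [← abs_neg, hut2]; exact intervalIntegral.abs_integral_le_integral_abs ht.2
  have hJsplit : (∫ s in a..t, |iteratedDeriv 1 u s|)
      + (∫ s in t..b, |iteratedDeriv 1 u s|) = J :=
    intervalIntegral.integral_add_adjacent_intervals
      (hc1.abs.intervalIntegrable _ _) (hc1.abs.intervalIntegrable _ _)
  have hptJ : |u t| ≤ J / 2 := by linarith only [habs1, habs2, hJsplit]
  have hJle : J ≤ π * M / D := by
    rw [le_div_iff₀ hD0, mul_comm]; exact hDJ
  calc |u t| ≤ J / 2 := hptJ
    _ ≤ (π * M / D) / 2 := by linarith only [hJle]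
    _ = π / 2 * M / D := by ring
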